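/- arXiv:0907.0487 — 4 statements merged into one kernel-verified Lean document; each statement's English description precedes it below -/
import Mathlib

section
/- As N → ∞, E[δ_N] = (2π)^{−1/2} log N + O(1); that is, the sequence E[δ_N] − (2π)^{−1/2} log N is bounded. -/
open MeasureTheory ProbabilityTheory Finset Filter Real


lemma half_split (a b : ℕ) (n : ℕ) :
    ((a + b : ℕ) : ENNReal)/2^(n+1) = (a:ENNReal)/2^n/2 + (b:ENNReal)/2^n/2 := by
  have key : ∀ c : ℕ, (c:ENNReal)/2^n/2 = (c:ENNReal)/2^(n+1) := by
    intro c
    rw [div_eq_mul_inv, div_eq_mul_inv, div_eq_mul_inv, mul_assoc, pow_succ,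
      ENNReal.mul_inv (by simp) (by simp [ENNReal.pow_ne_top])]
  rw [key, key, ENNReal.div_add_div_same, Nat.cast_add]

noncomputable def gfun (n : ℕ) (k : ℤ) : ENNReal :=
  if 0 ≤ (n:ℤ) - k ∧ ((n:ℤ) - k) % 2 = 0 then
    ((n.choose ((((n:ℤ) - k).toNat) / 2) : ℕ) : ENNReal) / 2^n else 0

lemma gfun_rec (n : ℕ) (k : ℤ) :
    gfun (n+1) k = gfun n (k-1) / 2 + gfun n (k+1) / 2 := by
  unfold gfun
  push_cast
  by_cases h0 : 0 ≤ (n:ℤ) + 1 - k ∧ ((n:ℤ) + 1 - k) % 2 = 0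
  · obtain ⟨j, hj⟩ : ∃ j : ℕ, (n:ℤ) + 1 - k = 2*j := by
      refine ⟨((n:ℤ)+1-k).toNat / 2, by omega⟩
    rw [if_pos h0, if_pos (by omega : 0 ≤ (n:ℤ) - (k-1) ∧ ((n:ℤ) - (k-1)) % 2 = 0)]
    have hL : ((n:ℤ) + 1 - k).toNat / 2 = j := by omega
    have h1 : ((n:ℤ) - (k-1)).toNat / 2 = j := by omega
    rw [hL, h1]
    rcases Nat.eq_zero_or_pos j with hj0 | hjpos
    · subst hj0
      rw [if_neg (by omega)]
      have : (1 : ℕ) = 1 + 0 := rfl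
      simp only [Nat.choose_zero_right]
      rw [show ((1:ℕ) : ENNReal) = ((1+0 : ℕ) : ENNReal) by norm_num,
        half_split 1 0 n]
      simp
    · rw [if_pos (by omega : 0 ≤ (n:ℤ) - (k+1) ∧ ((n:ℤ) - (k+1)) % 2 = 0)]
      have h2 : ((n:ℤ) - (k+1)).toNat / 2 = j - 1 := by omega
      rw [h2]
      obtain ⟨j', rfl⟩ : ∃ j', j = j' + 1 := ⟨j - 1, by omega⟩
      rw [Nat.choose_succ_succ, half_split, Nat.add_sub_cancel, add_comm]
  · rw [if_neg h0, if_neg (by omega), if_neg (by omega)]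
    simp


lemma gfun_zero (k : ℤ) : gfun 0 k = if k = 0 then 1 else 0 := by
  unfold gfun
  by_cases hk : k = 0
  · subst hk; simp
  · rw [if_neg hk]
    split
    · rename_i h
      rw [Nat.choose_eq_zero_of_lt (by omega)]
      simp
    · rfl



lemma measure_sum_eq {Ω : Type*} [MeasurableSpace Ω] (μ : Measure Ω)
    [IsProbabilityMeasure μ]
    (X : ℕ × ℕ → Ω → ℤ) (hmeasX : ∀ q, Measurable (X q))
    (hindepX : iIndepFun X μ)
    (hdistX : ∀ q, μ {ω | X q ω = 1} = 1/2 ∧ μ {ω | X q ω = -1} = 1/2)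
    (T : Finset (ℕ × ℕ)) (k : ℤ) :
    μ {ω | (∑ q ∈ T, X q ω) = k} = gfun T.card k := by
  induction T using Finset.induction generalizing k with
  | empty =>
    simp only [Finset.sum_empty, Finset.card_empty, gfun_zero]
    by_cases hk : k = 0
    · subst hk; simp
    · rw [if_neg hk]
      have : {ω : Ω | (0:ℤ) = k} = ∅ := by
        ext ω; simp [eq_comm, hk]
      rw [this, measure_empty]
  | @insert q s hq ih =>
    rw [Finset.card_insert_of_notMem hq, gfun_rec]
    set Z : Ω → ℤ := fun ω => ∑ p ∈ s, X p ω with hZ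
    have hZmeas : Measurable Z := Finset.measurable_sum s (fun p _ => hmeasX p)
    have hindep : IndepFun Z (X q) μ := by
      have h := hindepX.indepFun_finsetSum_of_notMem hmeasX hq
      have : (∑ j ∈ s, X j) = Z := by funext ω; simp [hZ, Finset.sum_apply]
      rwa [this] at h
    set A1 := X q ⁻¹' {1} with hA1def
    set A2 := X q ⁻¹' {-1} with hA2def
    have hA1 : MeasurableSet A1 := hmeasX q (measurableSet_singleton 1)
    have hA2 : MeasurableSet A2 := hmeasX q (measurableSet_singleton (-1))
    have hdisj : Disjoint A1 A2 := by
      rw [Set.disjoint_left]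
      intro ω h1 h2
      simp only [hA1def, hA2def, Set.mem_preimage, Set.mem_singleton_iff] at h1 h2
      omega
    have hA1m : μ A1 = 1/2 := by
      have := (hdistX q).1
      convert this using 2
      rfl
    have hA2m : μ A2 = 1/2 := by
      have := (hdistX q).2
      convert this using 2
      rfl
    have hunion : μ (A1 ∪ A2) = 1 := by
      rw [measure_union hdisj hA2, hA1m, hA2m]
      rw [one_div]; exact ENNReal.inv_two_add_inv_two
    have hcompl : μ ((A1 ∪ A2)ᶜ) = 0 := by
      rw [measure_compl (hA1.union hA2) (measure_ne_top μ _), hunion, measure_univ]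
      simp
    set E := {ω | (∑ p ∈ insert q s, X p ω) = k} with hEdef
    have hEeq : E = {ω | X q ω + Z ω = k} := by
      ext ω; simp [hEdef, hZ, Finset.sum_insert hq]
    have hEmeas : MeasurableSet E := by
      rw [hEeq]
      exact ((hmeasX q).add hZmeas) (measurableSet_singleton k)
    have hsplit : μ E = μ (E ∩ A1) + μ (E ∩ A2) := by
      have h1 : μ E = μ (E ∩ (A1 ∪ A2)) + μ (E ∩ (A1 ∪ A2)ᶜ) := by
        rw [← Set.diff_eq, measure_inter_add_diff E (hA1.union hA2)]
      have h2 : μ (E ∩ (A1 ∪ A2)ᶜ) = 0 :=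
        measure_mono_null Set.inter_subset_right hcompl
      rw [h1, h2, add_zero, Set.inter_union_distrib_left,
        measure_union (hdisj.mono Set.inter_subset_right Set.inter_subset_right)
          (hEmeas.inter hA2)]
    have hEA1 : E ∩ A1 = Z ⁻¹' {k - 1} ∩ A1 := by
      ext ω
      simp only [hEeq, Set.mem_inter_iff, Set.mem_setOf_eq, Set.mem_preimage,
        Set.mem_singleton_iff, hA1def]
      omega
    have hEA2 : E ∩ A2 = Z ⁻¹' {k + 1} ∩ A2 := by
      ext ω
      simp only [hEeq, Set.mem_inter_iff, Set.mem_setOf_eq, Set.mem_preimage,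
        Set.mem_singleton_iff, hA2def]
      omega
    have hm1 : μ (E ∩ A1) = gfun s.card (k - 1) * (1/2) := by
      rw [hEA1, hindep.measure_inter_preimage_eq_mul _ _ (measurableSet_singleton _)
        (measurableSet_singleton _), hA1m]
      congr 1
      rw [← ih (k-1)]
      rfl
    have hm2 : μ (E ∩ A2) = gfun s.card (k + 1) * (1/2) := by
      rw [hEA2, hindep.measure_inter_preimage_eq_mul _ _ (measurableSet_singleton _)
        (measurableSet_singleton _), hA2m]
      congr 1
      rw [← ih (k+1)]
      rfl
    rw [← hEdef] at *
    rw [hsplit, hm1, hm2, mul_one_div, mul_one_div]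


noncomputable def PP (n : ℕ) : ℝ := (Nat.centralBinom n : ℝ) / 4^n

lemma PP_pos (n : ℕ) : 0 < PP n :=
  div_pos (by exact_mod_cast Nat.centralBinom_pos n) (by positivity)

lemma centralBinom_real (n : ℕ) :
    (Nat.centralBinom n : ℝ) = (2*n).factorial / ((n.factorial : ℝ) * n.factorial) := by
  rw [eq_div_iff (by positivity), Nat.centralBinom]
  have := Nat.choose_mul_factorial_mul_factorial (show n ≤ 2*n by omega)
  rw [show 2*n-n = n from by omega] at this
  push_cast [← this]
  ring

lemma PP_sq (n : ℕ) : PP n ^ 2 * ((2*n+1) * Real.Wallis.W n) = 1 := by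
  rw [Real.Wallis.W_eq_factorial_ratio]
  unfold PP
  rw [centralBinom_real]
  have h1 : (n.factorial : ℝ) ≠ 0 := by positivity
  have h2 : ((2*n).factorial : ℝ) ≠ 0 := by positivity
  have h3 : (4:ℝ)^n ≠ 0 := by positivity
  have h4 : (2*(n:ℝ)+1) ≠ 0 := by positivity
  have h5 : (2:ℝ)^(4*n) = (4:ℝ)^n * 4^n := by
    rw [show (4:ℝ) = 2^2 by norm_num, ← pow_mul, ← pow_add]
    ring_nf
  rw [h5]
  field_simp

lemma PP_sq_eq (n : ℕ) : PP n ^ 2 = 1 / ((2*n+1) * Real.Wallis.W n) := by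
  have h := PP_sq n
  have hW := Real.Wallis.W_pos n
  field_simp at h ⊢
  linarith [h]

lemma PP_le (n : ℕ) (hn : 1 ≤ n) : PP n ≤ 1 / Real.sqrt (π * n) := by
  have hW := Real.Wallis.le_W n
  have hWpos := Real.Wallis.W_pos n
  have hn' : (1:ℝ) ≤ n := by exact_mod_cast hn
  have hkey : π * n ≤ (2*n+1) * Real.Wallis.W n := by
    have h1 : ((2:ℝ)*n+1) * (((2:ℝ) * n + 1) / (2 * n + 2) * (π / 2)) ≤
        (2*n+1) * Real.Wallis.W n := by
      apply mul_le_mul_of_nonneg_left hW (by positivity)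
    refine le_trans ?_ h1
    rw [div_mul_eq_mul_div, ← mul_div_assoc, le_div_iff₀ (by positivity : (0:ℝ) < 2*n+2)]
    nlinarith [pi_pos]
  have hsq : PP n ^ 2 ≤ 1 / (π * n) := by
    rw [PP_sq_eq]
    apply one_div_le_one_div_of_le (by positivity) hkey
  have := Real.sqrt_le_sqrt hsq
  rw [Real.sqrt_sq (PP_pos n).le] at this
  refine this.trans ?_
  rw [one_div, Real.sqrt_inv, one_div]
lemma le_PP (n : ℕ) : Real.sqrt (2 / (π * (2*n+1))) ≤ PP n := by
  have hW := Real.Wallis.W_le n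
  have hWpos := Real.Wallis.W_pos n
  have hkey : (2*(n:ℝ)+1) * Real.Wallis.W n ≤ π * (2*n+1) / 2 := by
    calc (2*(n:ℝ)+1) * Real.Wallis.W n ≤ (2*n+1) * (π/2) :=
          mul_le_mul_of_nonneg_left hW (by positivity)
      _ = π * (2*n+1) / 2 := by ring
  have hsq : 2 / (π * (2*n+1)) ≤ PP n ^ 2 := by
    rw [PP_sq_eq]
    rw [div_le_div_iff₀ (by positivity) (by positivity)]
    nlinarith [pi_pos]
  have := Real.sqrt_le_sqrt hsq
  rwa [Real.sqrt_sq (PP_pos n).le] at this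


lemma log_le_harmonic (N : ℕ) (hN : 1 ≤ N) :
    Real.log N ≤ ∑ i ∈ Finset.Icc 1 N, (1 / (i:ℝ)) := by
  have key : ∀ M : ℕ, Real.log (M+1) ≤ ∑ i ∈ Finset.Icc 1 M, (1 / (i:ℝ)) := by
    intro M
    induction M with
    | zero => simp
    | succ M ih =>
      have hstep : Real.log (M+2) - Real.log (M+1) ≤ 1 / (M+1) := by
        rw [← Real.log_div (by positivity) (by positivity)]
        have := Real.log_le_sub_one_of_pos
          (show (0:ℝ) < ((M:ℝ)+2)/((M:ℝ)+1) by positivity)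
        refine this.trans (le_of_eq ?_)
        field_simp
        norm_num
      rw [Finset.sum_Icc_succ_top (by omega : 1 ≤ M + 1)]
      push_cast
      push_cast at ih hstep
      have he : ((M:ℝ)+1+1) = (M:ℝ)+2 := by ring
      rw [he]
      linarith
  have h1 : Real.log N ≤ Real.log (N+1) := by
    apply Real.log_le_log (by exact_mod_cast hN)
    linarith
  exact h1.trans (key N)

lemma harmonic_le_log (N : ℕ) (hN : 1 ≤ N) :
    ∑ i ∈ Finset.Icc 1 N, (1 / (i:ℝ)) ≤ Real.log N + 1 := by
  induction N, hN using Nat.le_induction with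
  | base => simp
  | succ N hN ih =>
    have hstep : (1:ℝ) / (N+1) ≤ Real.log (N+1) - Real.log N := by
      have h := Real.log_le_sub_one_of_pos
        (show (0:ℝ) < ((N:ℝ))/((N:ℝ)+1) by
          have : (1:ℝ) ≤ N := by exact_mod_cast hN
          positivity)
      rw [Real.log_div (by
          have : (1:ℝ) ≤ N := by exact_mod_cast hN
          positivity) (by positivity)] at h
      have : (1:ℝ) ≤ N := by exact_mod_cast hN
      have h2 : (N:ℝ)/((N:ℝ)+1) - 1 = -(1/((N:ℝ)+1)) := by
        field_simp
        ring
      rw [h2] at h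
      linarith
    rw [Finset.sum_Icc_succ_top (by omega : 1 ≤ N + 1)]
    push_cast
    push_cast at ih hstep
    linarith

lemma sum_inv_sq_le (N : ℕ) : ∑ i ∈ Finset.Icc 1 N, (1 / (i:ℝ)^2) ≤ 2 := by
  have key : ∀ M : ℕ, 1 ≤ M → ∑ i ∈ Finset.Icc 1 M, (1 / (i:ℝ)^2) ≤ 2 - 1/(M:ℝ) := by
    intro M hM
    induction M, hM using Nat.le_induction with
    | base => norm_num
    | succ M hM ih =>
      rw [Finset.sum_Icc_succ_top (by omega : 1 ≤ M + 1)]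
      have hM' : (1:ℝ) ≤ M := by exact_mod_cast hM
      have hstep : (1:ℝ)/((M:ℝ)+1)^2 ≤ 1/(M:ℝ) - 1/((M:ℝ)+1) := by
        rw [div_sub_div _ _ (by positivity) (by positivity)]
        rw [div_le_div_iff₀ (by positivity) (by positivity)]
        ring_nf
        nlinarith
      push_cast
      push_cast at ih hstep
      linarith
  rcases Nat.eq_zero_or_pos N with h | h
  · subst h; simp
  · have := key N h
    have : (0:ℝ) < N := by exact_mod_cast h
    linarith [key N h, one_div_pos.mpr this]


lemma c_eq : (2*Real.pi) ^ (-(1/2) : ℝ) = 1 / Real.sqrt (2*Real.pi) := by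
  rw [Real.rpow_neg (by positivity), ← Real.sqrt_eq_rpow, one_div]

lemma c_nonneg : 0 ≤ (2*Real.pi) ^ (-(1/2) : ℝ) := by
  positivity

lemma sqrt_two_pi_ge_one : (1:ℝ) ≤ Real.sqrt (2*Real.pi) := by
  rw [show (1:ℝ) = Real.sqrt 1 by simp]
  exact Real.sqrt_le_sqrt (by nlinarith [Real.pi_gt_three])

lemma c_le_one : (2*Real.pi) ^ (-(1/2) : ℝ) ≤ 1 := by
  rw [c_eq, div_le_one (by linarith [sqrt_two_pi_ge_one])]
  exact sqrt_two_pi_ge_one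

lemma c_sq : ((2*Real.pi) ^ (-(1/2) : ℝ))^2 = 1/(2*Real.pi) := by
  rw [c_eq, div_pow, one_pow, Real.sq_sqrt (by positivity)]

lemma PP_upper (i : ℕ) (hi : 1 ≤ i) :
    PP (2*i^2) ≤ (2*Real.pi) ^ (-(1/2) : ℝ) / i := by
  have h := PP_le (2*i^2) (by nlinarith)
  refine h.trans (le_of_eq ?_)
  have hi' : (1:ℝ) ≤ (i:ℝ) := by exact_mod_cast hi
  have hsq : Real.sqrt (Real.pi * ((2*i^2 : ℕ):ℝ)) = Real.sqrt (2*Real.pi) * i := by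
    have harg : (Real.pi * ((2*i^2 : ℕ):ℝ)) = (2*Real.pi) * (i:ℝ)^2 := by
      push_cast; ring
    rw [harg, Real.sqrt_mul (by positivity), Real.sqrt_sq (by positivity)]
  rw [hsq, c_eq]
  rw [div_div]

lemma PP_lower (i : ℕ) (hi : 1 ≤ i) :
    (2*Real.pi) ^ (-(1/2) : ℝ) / i - 1/(i:ℝ)^2 ≤ PP (2*i^2) := by
  set c := (2*Real.pi) ^ (-(1/2) : ℝ) with hc
  have hcpos : 0 < c := by rw [hc]; positivity
  have hcle : c ≤ 1 := c_le_one
  have hi' : (1:ℝ) ≤ (i:ℝ) := by exact_mod_cast hi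
  have h := le_PP (2*i^2)
  have harg : (2:ℝ) / (Real.pi * (2*((2*i^2 : ℕ):ℝ)+1)) = 2 / (Real.pi * (4*(i:ℝ)^2+1)) := by
    push_cast; ring_nf
  rw [harg] at h
  have hstep : c * (4*(i:ℝ)/(4*(i:ℝ)^2+1)) ≤ Real.sqrt (2 / (Real.pi * (4*(i:ℝ)^2+1))) := by
    apply Real.le_sqrt_of_sq_le
    rw [mul_pow, c_sq, div_pow]
    rw [div_mul_div_comm, one_mul, div_le_div_iff₀ (by positivity) (by positivity)]
    have hpi := Real.pi_pos
    nlinarith [sq_nonneg ((i:ℝ))]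
  have hrest : c / i - c * (4*(i:ℝ)/(4*(i:ℝ)^2+1)) ≤ 1/(i:ℝ)^2 := by
    have heq : c / (i:ℝ) - c * (4*(i:ℝ)/(4*(i:ℝ)^2+1)) = c / ((i:ℝ)*(4*(i:ℝ)^2+1)) := by
      field_simp
      ring
    rw [heq]
    rw [div_le_div_iff₀ (by positivity) (by positivity)]
    nlinarith
  linarith [hstep.trans h]

theorem expected_diagonal_zeros
{Ω : Type*} [MeasurableSpace Ω] (μ : MeasureTheory.Measure Ω)
    [MeasureTheory.IsProbabilityMeasure μ]
    (X : ℕ × ℕ → Ω → ℤ) (hmeasX : ∀ q, Measurable (X q))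
    (hindepX : ProbabilityTheory.iIndepFun X μ)
    (hdistX : ∀ q, μ {ω | X q ω = 1} = 1/2 ∧ μ {ω | X q ω = -1} = 1/2)
    (S : ℕ → ℕ → Ω → ℤ)
    (hS : ∀ n m ω, S n m ω = ∑ i ∈ Finset.range n, ∑ j ∈ Finset.range m, X (i, j) ω)
(δ : ℕ → Ω → ℝ)
    (hδ : ∀ N ω, δ N ω = ∑ i ∈ Finset.Icc 1 N, if S (2*i) (2*i) ω = 0 then (1:ℝ) else 0) :
    ∃ C : ℝ, ∀ N : ℕ, 1 ≤ N →
      |(∫ ω, δ N ω ∂μ) - (2*Real.pi) ^ (-(1/2) : ℝ) * Real.log N| ≤ C := by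
  refine ⟨2, fun N hN => ?_⟩
  have hSrw : ∀ i : ℕ, ∀ ω, S (2*i) (2*i) ω
      = ∑ q ∈ Finset.range (2*i) ×ˢ Finset.range (2*i), X q ω := by
    intro i ω
    rw [hS, Finset.sum_product]
  have hmeasS : ∀ i : ℕ, MeasurableSet {ω | S (2*i) (2*i) ω = 0} := by
    intro i
    have hm : Measurable (fun ω => S (2*i) (2*i) ω) := by
      have heq : (fun ω => S (2*i) (2*i) ω)
          = fun ω => ∑ q ∈ Finset.range (2*i) ×ˢ Finset.range (2*i), X q ω := by
        funext ω; exact hSrw i ω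
      rw [heq]
      exact Finset.measurable_sum _ (fun q _ => hmeasX q)
    exact hm (measurableSet_singleton 0)
  have hind : ∀ i : ℕ, (fun ω => if S (2*i) (2*i) ω = 0 then (1:ℝ) else 0)
      = Set.indicator {ω | S (2*i) (2*i) ω = 0} (fun _ => (1:ℝ)) := by
    intro i; funext ω
    simp [Set.indicator_apply]
  have hint : ∀ i : ℕ, Integrable (fun ω => if S (2*i) (2*i) ω = 0 then (1:ℝ) else 0) μ := by
    intro i
    rw [hind i]
    exact (integrable_const 1).indicator (hmeasS i)
  have hInt : (∫ ω, δ N ω ∂μ)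
      = ∑ i ∈ Finset.Icc 1 N, (μ {ω | S (2*i) (2*i) ω = 0}).toReal := by
    simp only [hδ]
    rw [integral_finset_sum _ (fun i _ => hint i)]
    refine Finset.sum_congr rfl (fun i _ => ?_)
    rw [hind i, integral_indicator_const _ (hmeasS i), smul_eq_mul, mul_one]
    rfl
  have hprob : ∀ i : ℕ, (μ {ω | S (2*i) (2*i) ω = 0}).toReal = PP (2*i^2) := by
    intro i
    have hset : {ω | S (2*i) (2*i) ω = 0}
        = {ω | (∑ q ∈ Finset.range (2*i) ×ˢ Finset.range (2*i), X q ω) = 0} := by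
      ext ω; rw [Set.mem_setOf_eq, Set.mem_setOf_eq, hSrw i ω]
    rw [hset, measure_sum_eq μ X hmeasX hindepX hdistX _ 0]
    have hcard : (Finset.range (2*i) ×ˢ Finset.range (2*i)).card = 2*(2*i^2) := by
      rw [Finset.card_product, Finset.card_range]; ring
    rw [hcard]
    obtain ⟨m, hm⟩ : ∃ m, 2*i^2 = m := ⟨_, rfl⟩
    rw [hm]
    unfold gfun
    rw [if_pos (by push_cast; omega)]
    have hidx : ((((2*m : ℕ)):ℤ) - 0).toNat / 2 = m := by
      push_cast; omega
    rw [hidx, ← Nat.centralBinom_eq_two_mul_choose]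
    rw [ENNReal.toReal_div]
    unfold PP
    have hden : ((2:ENNReal)^(2*m)).toReal = (4:ℝ)^m := by
      rw [show ((2:ENNReal)^(2*m)).toReal = ((2:ℝ))^(2*m) by simp]
      rw [pow_mul]; norm_num
    rw [hden]
    simp
  have hsum : (∫ ω, δ N ω ∂μ) = ∑ i ∈ Finset.Icc 1 N, PP (2*i^2) := by
    rw [hInt]
    exact Finset.sum_congr rfl (fun i _ => hprob i)
  rw [hsum]
  set c := (2*Real.pi) ^ (-(1/2) : ℝ) with hc
  have hc0 : 0 ≤ c := c_nonneg
  have hc1 : c ≤ 1 := c_le_one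
  set H := ∑ i ∈ Finset.Icc 1 N, (1/(i:ℝ)) with hH
  have hub : ∑ i ∈ Finset.Icc 1 N, PP (2*i^2) ≤ c * H := by
    rw [hH, Finset.mul_sum]
    refine Finset.sum_le_sum (fun i hi => ?_)
    rw [mul_one_div]
    exact PP_upper i (Finset.mem_Icc.mp hi).1
  have hlb : c * H - 2 ≤ ∑ i ∈ Finset.Icc 1 N, PP (2*i^2) := by
    have h1 : ∑ i ∈ Finset.Icc 1 N, (c/(i:ℝ) - 1/(i:ℝ)^2)
        ≤ ∑ i ∈ Finset.Icc 1 N, PP (2*i^2) :=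
      Finset.sum_le_sum (fun i hi => PP_lower i (Finset.mem_Icc.mp hi).1)
    rw [Finset.sum_sub_distrib] at h1
    have h2 := sum_inv_sq_le N
    have h3 : ∑ i ∈ Finset.Icc 1 N, c/(i:ℝ) = c * H := by
      rw [hH, Finset.mul_sum]
      exact Finset.sum_congr rfl (fun i _ => by rw [mul_one_div])
    linarith
  have hlog1 := log_le_harmonic N hN
  have hlog2 := harmonic_le_log N hN
  rw [← hH] at hlog1 hlog2
  have hm1 : c * Real.log N ≤ c * H := mul_le_mul_of_nonneg_left hlog1 hc0
  have hm2 : c * H ≤ c * (Real.log N + 1) := mul_le_mul_of_nonneg_left hlog2 hc0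
  rw [abs_le]
  constructor
  · nlinarith
  · nlinarith
end

section
/- The double series Σ_{1 ≤ i < j < ∞, j < 2i} i / (j^3 (j−i)^{3/2}) converges. -/
set_option maxHeartbeats 1000000 in
theorem double_sum_near_diagonal_converges :
    Summable (fun q : {q : ℕ × ℕ // 1 ≤ q.1 ∧ q.1 < q.2 ∧ q.2 < 2 * q.1} =>
      (q.val.1 : ℝ) / ((q.val.2 : ℝ)^3 * ((q.val.2 : ℝ) - (q.val.1 : ℝ)) ^ ((3:ℝ)/2))) := by
  have h1 : Summable (fun n : ℕ => 1 / (n:ℝ)^2) := by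
    simpa using Real.summable_one_div_nat_pow.mpr one_lt_two
  have h2 : Summable (fun n : ℕ => 1 / (n:ℝ) ^ ((3:ℝ)/2)) :=
    (Real.summable_one_div_nat_rpow).mpr (by norm_num)
  have hF : Summable (fun p : ℕ × ℕ => (1 / (p.1:ℝ)^2) * (1 / (p.2:ℝ) ^ ((3:ℝ)/2))) :=
    h1.mul_of_nonneg h2 (fun n => by positivity) (fun n => by positivity)
  have hinj : Function.Injective
      (fun q : {q : ℕ × ℕ // 1 ≤ q.1 ∧ q.1 < q.2 ∧ q.2 < 2 * q.1} =>
        (q.val.1, q.val.2 - q.val.1)) := by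
    rintro ⟨⟨a,b⟩, ha⟩ ⟨⟨c,d⟩, hc⟩ h
    simp only [Prod.mk.injEq] at h
    obtain ⟨rfl, h2⟩ := h
    simp only [Subtype.mk.injEq, Prod.mk.injEq, true_and]
    omega
  have hFe := hF.comp_injective hinj
  refine hFe.of_nonneg_of_le (fun q => ?_) (fun q => ?_)
  · obtain ⟨⟨i, j⟩, hi, hij, hj⟩ := q
    have hle : (i:ℝ) ≤ j := by exact_mod_cast hij.le
    have := Real.rpow_nonneg (by linarith : (0:ℝ) ≤ (j:ℝ) - i) ((3:ℝ)/2)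
    positivity
  · obtain ⟨⟨i, j⟩, hi, hij, hj⟩ := q
    simp only [Function.comp]
    have hcast : ((j - i : ℕ) : ℝ) = (j:ℝ) - i := by
      rw [Nat.cast_sub hij.le]
    rw [hcast]
    have hipos : (0:ℝ) < i := by exact_mod_cast hi
    have hjpos : (0:ℝ) < j := by exact_mod_cast Nat.lt_of_lt_of_le (by omega) hij.le
    have hd : (0:ℝ) < (j:ℝ) - i := by
      have : (i:ℝ) < j := by exact_mod_cast hij
      linarith
    have hdr : (0:ℝ) < ((j:ℝ) - i) ^ ((3:ℝ)/2) := Real.rpow_pos_of_pos hd _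
    rw [div_eq_mul_inv, mul_inv, ← mul_assoc]
    have h3 : (i:ℝ) * ((j:ℝ)^3)⁻¹ ≤ 1 / (i:ℝ)^2 := by
      rw [div_eq_mul_inv, one_mul]
      rw [mul_inv_le_iff₀ (by positivity), inv_mul_eq_div, le_div_iff₀ (by positivity)]
      have hij' : (i:ℝ) ≤ j := by exact_mod_cast hij.le
      nlinarith [pow_le_pow_left₀ hipos.le hij' 3]
    calc (i:ℝ) * ((j:ℝ)^3)⁻¹ * (((j:ℝ) - i) ^ ((3:ℝ)/2))⁻¹
        ≤ 1 / (i:ℝ)^2 * (((j:ℝ) - i) ^ ((3:ℝ)/2))⁻¹ := by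
          gcongr
      _ = 1 / (i:ℝ)^2 * (1 / ((j:ℝ) - i) ^ ((3:ℝ)/2)) := by simp [one_div]
end

section
/- There exists a constant K > 0 such that for all n ≥ 1 and all positive even integers x ≤ 2n, P(W_{2n} = x | W_{2n} ≥ x) ≥ K/√n. -/
open MeasureTheory ProbabilityTheory Finset ENNReal



/-- Central binomial coefficient lower bound `4^n ≤ 2√n * C(2n,n)`. -/
lemma central_binom_lb : ∀ n : ℕ, 1 ≤ n → (4:ℝ)^n ≤ 2 * Real.sqrt n * Nat.centralBinom n := by
  intro n hn
  induction n, hn using Nat.le_induction with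
  | base => simp [Nat.centralBinom]; norm_num [Real.sqrt_one]
  | succ n hn ih =>
    have hcb : ((n+1 : ℕ) : ℝ) * (Nat.centralBinom (n+1) : ℝ)
        = 2 * (2*n+1) * Nat.centralBinom n := by
      have := Nat.succ_mul_centralBinom_succ n
      exact_mod_cast congrArg (Nat.cast (R := ℝ)) this
    have hsn : (0:ℝ) ≤ Real.sqrt n := Real.sqrt_nonneg _
    have hsm : (0:ℝ) ≤ Real.sqrt (n+1) := Real.sqrt_nonneg _
    have hn2 : (Real.sqrt n)^2 = n := Real.sq_sqrt (by positivity)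
    have hm2 : (Real.sqrt (n+1))^2 = (n:ℝ)+1 := by
      rw [Real.sq_sqrt (by positivity)]
    have hkey : 2 * Real.sqrt n * ((n:ℝ)+1) ≤ Real.sqrt (n+1) * (2*n+1) := by
      have h1 : (0:ℝ) ≤ Real.sqrt (n+1) * (2*n+1) := by positivity
      nlinarith [sq_nonneg (Real.sqrt (n+1) * (2*n+1) - 2 * Real.sqrt n * ((n:ℝ)+1)),
        sq_nonneg (Real.sqrt (n+1) * (2*n+1) + 2 * Real.sqrt n * ((n:ℝ)+1)),
        mul_nonneg hsn hsm]
    have hpos : (0:ℝ) < (n:ℝ) + 1 := by positivity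
    have hcbn : (0:ℝ) ≤ (Nat.centralBinom n : ℝ) := Nat.cast_nonneg _
    have hcbval : (Nat.centralBinom (n+1) : ℝ) = 2 * (2*n+1) * Nat.centralBinom n / ((n:ℝ)+1) := by
      field_simp at hcb ⊢
      push_cast at hcb
      linarith
    rw [pow_succ]
    push_cast
    rw [hcbval]
    have hrw : 2 * Real.sqrt ((n:ℝ)+1) * (2 * (2*(n:ℝ)+1) * (Nat.centralBinom n:ℝ) / ((n:ℝ)+1))
        = 2 * Real.sqrt ((n:ℝ)+1) * (2 * (2*(n:ℝ)+1) * (Nat.centralBinom n:ℝ)) / ((n:ℝ)+1) := by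
      ring
    rw [hrw, le_div_iff₀ hpos]
    nlinarith [ih, hkey, mul_nonneg (mul_nonneg (by norm_num : (0:ℝ) ≤ 4) hcbn) hpos.le]


/-- ratio step: for `n+k ≤ m`, `C(2n, m+1) ≤ r * C(2n, m)` with `r = (n-k)/(n+k+1)`. -/
lemma choose_ratio_step (n k m : ℕ) (hk : k ≤ n) (hm : n + k ≤ m) :
    ((2*n).choose (m+1) : ℝ) ≤ (((n:ℝ) - k) / ((n:ℝ) + k + 1)) * (2*n).choose m := by
  have hr0 : (0:ℝ) ≤ ((n:ℝ) - k) / ((n:ℝ) + k + 1) := by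
    apply div_nonneg <;> [skip; positivity]
    have : (k:ℝ) ≤ n := by exact_mod_cast hk
    linarith
  by_cases h2 : 2*n ≤ m
  · rw [Nat.choose_eq_zero_of_lt (by omega)]
    push_cast
    positivity
  · push_neg at h2
    have hid := Nat.choose_succ_right_eq (2*n) m
    have hidR : ((2*n).choose (m+1) : ℝ) * ((m:ℝ)+1) = (2*n).choose m * (2*(n:ℝ) - m) := by
      have : ((2*n).choose (m+1) * (m+1) : ℕ) = ((2*n).choose m * (2*n - m) : ℕ) := hid
      have := congrArg (Nat.cast (R := ℝ)) this
      push_cast [Nat.cast_sub h2.le] at this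
      linarith
    have hm1 : (0:ℝ) < (m:ℝ) + 1 := by positivity
    rw [← mul_le_mul_iff_of_pos_right hm1, hidR]
    have hfrac : (2*(n:ℝ) - m) * ((n:ℝ) + k + 1) ≤ ((n:ℝ) - k) * ((m:ℝ) + 1) := by
      have hmn : (n:ℝ) + k ≤ m := by exact_mod_cast hm
      have hkn : (k:ℝ) ≤ n := by exact_mod_cast hk
      nlinarith
    have hden : (0:ℝ) < (n:ℝ) + k + 1 := by positivity
    have hch : (0:ℝ) ≤ ((2*n).choose m : ℝ) := Nat.cast_nonneg _
    have h1 : ((2*n).choose m : ℝ) * ((2*(n:ℝ) - m) * ((n:ℝ)+k+1))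
        ≤ (2*n).choose m * (((n:ℝ) - k) * ((m:ℝ)+1)) :=
      mul_le_mul_of_nonneg_left hfrac hch
    rw [div_mul_eq_mul_div, div_mul_eq_mul_div, le_div_iff₀ hden]
    nlinarith [h1]

/-- Iterated: `C(2n, n+k+i) ≤ r^i * C(2n, n+k)`. -/
lemma choose_ratio_pow (n k : ℕ) (hk : k ≤ n) (i : ℕ) :
    ((2*n).choose (n+k+i) : ℝ) ≤ (((n:ℝ) - k) / ((n:ℝ) + k + 1))^i * (2*n).choose (n+k) := by
  induction i with
  | zero => simp
  | succ i ih =>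
    have hr0 : (0:ℝ) ≤ ((n:ℝ) - k) / ((n:ℝ) + k + 1) := by
      apply div_nonneg
      · have : (k:ℝ) ≤ n := by exact_mod_cast hk
        linarith
      · positivity
    calc ((2*n).choose (n+k+(i+1)) : ℝ) = (2*n).choose ((n+k+i)+1) := by ring_nf
      _ ≤ (((n:ℝ) - k) / ((n:ℝ) + k + 1)) * (2*n).choose (n+k+i) :=
          choose_ratio_step n k (n+k+i) hk (by omega)
      _ ≤ (((n:ℝ) - k) / ((n:ℝ) + k + 1)) * ((((n:ℝ) - k) / ((n:ℝ) + k + 1))^i * (2*n).choose (n+k)) :=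
          mul_le_mul_of_nonneg_left ih hr0
      _ = (((n:ℝ) - k) / ((n:ℝ) + k + 1))^(i+1) * (2*n).choose (n+k) := by ring

/-- Lower-bound step: for `j < k ≤ n`, `s * C(2n, n+j) ≤ C(2n, n+j+1)` with `s=(n-k)/(n+k)`. -/
lemma choose_lb_step (n k j : ℕ) (hk : k ≤ n) (hj : j < k) :
    (((n:ℝ) - k) / ((n:ℝ) + k)) * (2*n).choose (n+j) ≤ (2*n).choose (n+j+1) := by
  have hkR : (k:ℝ) ≤ n := by exact_mod_cast hk
  have hjk : (j:ℝ) + 1 ≤ k := by exact_mod_cast hj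
  have hden : (0:ℝ) < (n:ℝ) + k := by
    have hkpos : 0 < k := by omega
    have : (0:ℝ) < k := by exact_mod_cast hkpos
    linarith
  have h2 : n + j < 2*n := by omega
  have hid := Nat.choose_succ_right_eq (2*n) (n+j)
  have hidR : ((2*n).choose (n+j+1) : ℝ) * ((n:ℝ)+j+1) = (2*n).choose (n+j) * ((n:ℝ) - j) := by
    have := congrArg (Nat.cast (R := ℝ)) hid
    push_cast [Nat.cast_sub h2.le] at this
    push_cast
    linarith
  have hm1 : (0:ℝ) < (n:ℝ) + j + 1 := by positivity
  rw [← mul_le_mul_iff_of_pos_right hm1, hidR]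
  have hch : (0:ℝ) ≤ ((2*n).choose (n+j) : ℝ) := Nat.cast_nonneg _
  have hfrac : ((n:ℝ) - k) * ((n:ℝ)+j+1) ≤ ((n:ℝ) - j) * ((n:ℝ) + k) := by nlinarith
  rw [div_mul_eq_mul_div, div_mul_eq_mul_div, div_le_iff₀ hden]
  nlinarith [mul_le_mul_of_nonneg_left hfrac hch]

/-- Lower bound: `C(2n,n) ≤ 2*C(2n, n+k)` when `1 ≤ k`, `4k² ≤ n`. -/
lemma choose_shift_lb (n k : ℕ) (hk1 : 1 ≤ k) (hk : k ≤ n) (h4 : 4*k^2 ≤ n) :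
    ((2*n).choose n : ℝ) ≤ 2 * (2*n).choose (n+k) := by
  have hkR : (k:ℝ) ≤ n := by exact_mod_cast hk
  have hk1R : (1:ℝ) ≤ k := by exact_mod_cast hk1
  have h4R : 4*(k:ℝ)^2 ≤ n := by exact_mod_cast h4
  set s : ℝ := ((n:ℝ) - k) / ((n:ℝ) + k) with hs
  have hden : (0:ℝ) < (n:ℝ) + k := by linarith
  have hs0 : 0 ≤ s := div_nonneg (by linarith) hden.le
  -- Step A : s^j * C(2n,n) ≤ C(2n, n+j) for j ≤ k
  have stepA : ∀ j, j ≤ k → s^j * ((2*n).choose n : ℝ) ≤ (2*n).choose (n+j) := by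
    intro j
    induction j with
    | zero => intro _; simp
    | succ j ih =>
      intro hj
      calc s^(j+1) * ((2*n).choose n : ℝ) = s * (s^j * (2*n).choose n) := by ring
        _ ≤ s * (2*n).choose (n+j) := mul_le_mul_of_nonneg_left (ih (by omega)) hs0
        _ ≤ (2*n).choose (n+j+1) := choose_lb_step n k j hk (by omega)
  -- Step B : 1/2 ≤ s^k
  have stepB : (1/2 : ℝ) ≤ s^k := by
    have ha : (-1:ℝ) ≤ -2*k/((n:ℝ)+k) := by
      have h2 : 2*(k:ℝ)/((n:ℝ)+k) ≤ 1 := by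
        rw [div_le_one hden]; linarith
      have he : -2*(k:ℝ)/((n:ℝ)+k) = -(2*(k:ℝ)/((n:ℝ)+k)) := by ring
      rw [he]; linarith
    have hbern := one_add_mul_le_pow (a := -2*(k:ℝ)/((n:ℝ)+k)) (by linarith) k
    have hsa : 1 + -2*(k:ℝ)/((n:ℝ)+k) = s := by
      rw [hs]
      field_simp
      ring
    rw [hsa] at hbern
    have : 1 - 2*(k:ℝ)^2/((n:ℝ)+k) ≤ 1 + (k:ℝ) * (-2*(k:ℝ)/((n:ℝ)+k)) := by
      rw [mul_div_assoc']
      ring_nf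
      nlinarith [hden]
    have h5 : (1/2:ℝ) ≤ 1 - 2*(k:ℝ)^2/((n:ℝ)+k) := by
      rw [le_sub_comm]
      rw [div_le_iff₀ hden]
      nlinarith
    linarith
  -- conclude
  have := stepA k le_rfl
  nlinarith [Nat.cast_nonneg (α := ℝ) ((2*n).choose n)]

/-- Main combinatorial inequality. -/
lemma sum_choose_le (n k : ℕ) (hk1 : 1 ≤ k) (hkn : k ≤ n) :
    (∑ m ∈ Finset.Icc (n+k) (2*n), ((2*n).choose m : ℝ))
      ≤ 4 * Real.sqrt n * (2*n).choose (n+k) := by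
  have hn1 : 1 ≤ n := hk1.trans hkn
  have hsn1 : (1:ℝ) ≤ Real.sqrt n := by
    rw [show (1:ℝ) = Real.sqrt 1 by simp [Real.sqrt_one]]
    exact Real.sqrt_le_sqrt (by exact_mod_cast hn1)
  have hsn2 : (Real.sqrt n)^2 = n := Real.sq_sqrt (by positivity)
  by_cases h4 : 4*k^2 ≤ n
  · -- small k : compare with total sum 4^n
    have h1 : (∑ m ∈ Finset.Icc (n+k) (2*n), ((2*n).choose m : ℝ))
        ≤ ∑ m ∈ Finset.range (2*n+1), ((2*n).choose m : ℝ) := by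
      apply Finset.sum_le_sum_of_subset_of_nonneg
      · intro m hm
        simp only [Finset.mem_Icc] at hm
        simp only [Finset.mem_range]
        omega
      · intros; positivity
    have h2 : (∑ m ∈ Finset.range (2*n+1), ((2*n).choose m : ℝ)) = (4:ℝ)^n := by
      rw [← Nat.cast_sum]
      rw [Nat.sum_range_choose]
      rw [show (4:ℝ)^n = ((2:ℝ)^(2*n)) by rw [pow_mul]; norm_num]
      push_cast
      ring
    have h3 := central_binom_lb n hn1
    have h5 := choose_shift_lb n k hk1 hkn h4
    rw [Nat.centralBinom_eq_two_mul_choose] at h3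
    calc (∑ m ∈ Finset.Icc (n+k) (2*n), ((2*n).choose m : ℝ)) ≤ (4:ℝ)^n := by rw [← h2]; exact h1
      _ ≤ 2 * Real.sqrt n * (2*n).choose n := h3
      _ ≤ 2 * Real.sqrt n * (2 * (2*n).choose (n+k)) := by
          apply mul_le_mul_of_nonneg_left h5 (by positivity)
      _ = 4 * Real.sqrt n * (2*n).choose (n+k) := by ring
  · -- large k : geometric bound
    push_neg at h4
    set r : ℝ := ((n:ℝ) - k) / ((n:ℝ) + k + 1) with hr
    have hkR : (k:ℝ) ≤ n := by exact_mod_cast hkn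
    have hk1R : (1:ℝ) ≤ k := by exact_mod_cast hk1
    have hden : (0:ℝ) < (n:ℝ) + k + 1 := by positivity
    have hr0 : 0 ≤ r := div_nonneg (by linarith) hden.le
    have hr1 : r < 1 := by
      rw [hr, div_lt_one hden]; linarith
    have hge : ∀ N : ℕ, ∑ i ∈ Finset.range N, r^i ≤ ((n:ℝ) + k + 1)/(2*k+1) := by
      intro N
      have hrne : r ≠ 1 := ne_of_lt hr1
      rw [geom_sum_eq hrne]
      have h1r : 0 < 1 - r := by linarith
      have hrN : r^N ≤ 1 := pow_le_one₀ hr0 hr1.le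
      have e1 : (r^N - 1)/(r - 1) = (1 - r^N)/(1 - r) := by
        rw [div_eq_div_iff (by linarith) (by linarith)]; ring
      rw [e1]
      have hnum : 1 - r^N ≤ 1 := by nlinarith [pow_nonneg hr0 N]
      have e2 : 1 - r = (2*(k:ℝ)+1)/((n:ℝ)+k+1) := by
        rw [hr, eq_div_iff (ne_of_gt hden), sub_mul, div_mul_cancel₀ _ (ne_of_gt hden)]
        ring
      calc (1 - r^N)/(1 - r) ≤ 1/(1 - r) := by gcongr
        _ = ((n:ℝ)+k+1)/(2*(k:ℝ)+1) := by rw [e2, one_div_div]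
    -- reindex the sum
    have hreindex : (∑ m ∈ Finset.Icc (n+k) (2*n), ((2*n).choose m : ℝ))
        = ∑ i ∈ Finset.range (n-k+1), ((2*n).choose (n+k+i) : ℝ) := by
      rw [show Finset.Icc (n+k) (2*n) = Finset.Ico (n+k) (2*n+1) by
        ext m; simp [Nat.lt_succ_iff]]
      rw [Finset.sum_Ico_eq_sum_range]
      apply Finset.sum_congr
      · congr 1; omega
      · intros; rfl
    have hchpos : (0:ℝ) ≤ ((2*n).choose (n+k) : ℝ) := Nat.cast_nonneg _
    have hbound : (∑ i ∈ Finset.range (n-k+1), ((2*n).choose (n+k+i) : ℝ))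
        ≤ ((2*n).choose (n+k) : ℝ) * (((n:ℝ)+k+1)/(2*(k:ℝ)+1)) := by
      calc (∑ i ∈ Finset.range (n-k+1), ((2*n).choose (n+k+i) : ℝ))
          ≤ ∑ i ∈ Finset.range (n-k+1), r^i * ((2*n).choose (n+k) : ℝ) := by
            apply Finset.sum_le_sum
            intro i _
            exact choose_ratio_pow n k hkn i
        _ = ((2*n).choose (n+k) : ℝ) * ∑ i ∈ Finset.range (n-k+1), r^i := by
            rw [Finset.mul_sum]; apply Finset.sum_congr rfl; intros; ring
        _ ≤ ((2*n).choose (n+k) : ℝ) * (((n:ℝ)+k+1)/(2*(k:ℝ)+1)) := by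
            apply mul_le_mul_of_nonneg_left (hge _) hchpos
    -- final numeric estimate
    have hsnk : Real.sqrt n < 2*k := by
      have h4R : (n:ℝ) < 4*(k:ℝ)^2 := by exact_mod_cast h4
      by_contra hcon
      push_neg at hcon
      have hprod : (2*(k:ℝ))*(2*(k:ℝ)) ≤ Real.sqrt n * Real.sqrt n :=
        mul_le_mul hcon hcon (by positivity) (Real.sqrt_nonneg _)
      rw [Real.mul_self_sqrt (by positivity)] at hprod
      nlinarith
    have hfinal : ((n:ℝ)+k+1)/(2*(k:ℝ)+1) ≤ 4 * Real.sqrt n := by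
      rw [div_le_iff₀ (by linarith)]
      nlinarith [hsn1, hsn2, hsnk, hk1R]
    rw [hreindex]
    calc (∑ i ∈ Finset.range (n-k+1), ((2*n).choose (n+k+i) : ℝ))
        ≤ ((2*n).choose (n+k) : ℝ) * (((n:ℝ)+k+1)/(2*(k:ℝ)+1)) := hbound
      _ ≤ ((2*n).choose (n+k) : ℝ) * (4 * Real.sqrt n) :=
          mul_le_mul_of_nonneg_left hfinal hchpos
      _ = 4 * Real.sqrt n * (2*n).choose (n+k) := by ring


/-- Sum of ±1 indicator function over `Fin N`. -/
lemma sum_pm_indicator {N : ℕ} (P : Finset (Fin N)) :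
    ∑ i : Fin N, (if i ∈ P then (1:ℤ) else -1) = 2*(P.card:ℤ) - N := by
  rw [Finset.sum_ite]
  simp only [Finset.sum_const, nsmul_eq_mul, mul_one, mul_neg_one]
  have h1 : Finset.univ.filter (fun i => i ∈ P) = P := by ext i; simp
  have h2 : (Finset.univ.filter (fun i => ¬ i ∈ P)).card = N - P.card := by
    have := Finset.card_filter_add_card_filter_not (s := (Finset.univ : Finset (Fin N)))
      (p := fun i => i ∈ P)
    simp only [Finset.card_univ, Fintype.card_fin] at this
    rw [h1] at this
    omega
  rw [h1, h2]
  have hle : P.card ≤ N := by simpa using Finset.card_le_univ P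
  omega

/-- Counting ±1 vectors via subsets. -/
lemma card_pm_filter (N : ℕ) (p : ℤ → Prop) [DecidablePred p] :
    ((Fintype.piFinset fun _ : Fin N => ({-1, 1} : Finset ℤ)).filter
        (fun ε => p (∑ i, ε i))).card
      = ((Finset.univ : Finset (Finset (Fin N))).filter
        (fun P => p (2*(P.card:ℤ) - N))).card := by
  apply Finset.card_bij (fun ε _ => Finset.univ.filter (fun i => ε i = 1))
  · intro ε hε
    simp only [Finset.mem_filter, Fintype.mem_piFinset, Finset.mem_insert,
      Finset.mem_singleton] at hε
    obtain ⟨hmem, hp⟩ := hε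
    simp only [Finset.mem_filter, Finset.mem_univ, true_and]
    have hsum : ∑ i, ε i = ∑ i : Fin N, (if i ∈ Finset.univ.filter (fun i => ε i = 1) then (1:ℤ) else -1) := by
      apply Finset.sum_congr rfl
      intro i _
      rcases hmem i with h | h <;> simp [h]
    rw [hsum, sum_pm_indicator] at hp
    exact hp
  · intro ε hε ε' hε' heq
    simp only [Finset.mem_filter, Fintype.mem_piFinset, Finset.mem_insert,
      Finset.mem_singleton] at hε hε'
    funext i
    have h1 : ε i = 1 ↔ ε' i = 1 := by
      constructor <;> intro h
      · have : i ∈ Finset.univ.filter (fun j => ε j = 1) := by simp [h]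
        rw [heq] at this; simpa using this
      · have : i ∈ Finset.univ.filter (fun j => ε' j = 1) := by simp [h]
        rw [← heq] at this; simpa using this
    rcases hε.1 i with h | h <;> rcases hε'.1 i with h' | h' <;> simp_all
  · intro P hP
    simp only [Finset.mem_filter, Finset.mem_univ, true_and] at hP
    refine ⟨fun i => if i ∈ P then 1 else -1, ?_, ?_⟩
    · simp only [Finset.mem_filter, Fintype.mem_piFinset, Finset.mem_insert,
        Finset.mem_singleton]
      constructor
      · intro i; by_cases h : i ∈ P <;> simp [h]
      · rw [sum_pm_indicator]; exact hP
    · ext i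
      by_cases h : i ∈ P <;> simp [h]

/-- Number of subsets of `Fin N` with card `m` is `N.choose m`. -/
lemma card_filter_card_eq (N m : ℕ) :
    ((Finset.univ : Finset (Finset (Fin N))).filter (fun P => P.card = m)).card
      = N.choose m := by
  have : (Finset.univ : Finset (Finset (Fin N))).filter (fun P => P.card = m)
      = Finset.powersetCard m (Finset.univ : Finset (Fin N)) := by
    rw [Finset.powersetCard_eq_filter, Finset.powerset_univ]
  rw [this, Finset.card_powersetCard, Finset.card_univ, Fintype.card_fin]

/-- Number of subsets of `Fin N` with card ≥ m. -/
lemma card_filter_card_ge (N m : ℕ) :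
    ((Finset.univ : Finset (Finset (Fin N))).filter (fun P => m ≤ P.card)).card
      = ∑ j ∈ Finset.Icc m N, N.choose j := by
  have hdecomp : (Finset.univ : Finset (Finset (Fin N))).filter (fun P => m ≤ P.card)
      = (Finset.Icc m N).biUnion (fun j => Finset.univ.filter (fun P => P.card = j)) := by
    ext P
    simp only [Finset.mem_filter, Finset.mem_univ, true_and, Finset.mem_biUnion,
      Finset.mem_Icc]
    constructor
    · intro h
      exact ⟨P.card, ⟨h, by simpa using Finset.card_le_univ P⟩, rfl⟩
    · rintro ⟨j, ⟨hj1, _⟩, rfl⟩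
      exact hj1
  rw [hdecomp, Finset.card_biUnion]
  · apply Finset.sum_congr rfl
    intro j _
    exact card_filter_card_eq N j
  · intro a _ b _ hab
    simp only [Finset.disjoint_left, Finset.mem_filter]
    rintro P ⟨_, h1⟩ ⟨_, h2⟩
    exact hab (h1 ▸ h2 ▸ rfl)


lemma meas_sum_eq {Ω : Type*} [MeasurableSpace Ω] (μ : MeasureTheory.Measure Ω)
    [MeasureTheory.IsProbabilityMeasure μ]
    (ξ : ℕ → Ω → ℤ) (hmeasξ : ∀ i, Measurable (ξ i))
    (hindepξ : ProbabilityTheory.iIndepFun ξ μ)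
    (hdistξ : ∀ i, μ {ω | ξ i ω = 1} = 1/2 ∧ μ {ω | ξ i ω = -1} = 1/2)
    (N : ℕ) (p : ℤ → Prop) [DecidablePred p] :
    μ {ω | p (∑ i ∈ Finset.range N, ξ i ω)}
      = (((Fintype.piFinset fun _ : Fin N => ({-1, 1} : Finset ℤ)).filter
          (fun ε => p (∑ i, ε i))).card : ℝ≥0∞) * (2⁻¹ : ℝ≥0∞)^N := by
  classical
  -- each ξ i is ±1 a.s.
  have hBmeas : ∀ i, MeasurableSet {ω | ξ i ω = 1 ∨ ξ i ω = -1} := by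
    intro i
    have : {ω | ξ i ω = 1 ∨ ξ i ω = -1}
        = (ξ i ⁻¹' {1}) ∪ (ξ i ⁻¹' {-1}) := by
      ext ω; simp [Set.mem_preimage]
    rw [this]
    exact ((hmeasξ i) (measurableSet_singleton _)).union ((hmeasξ i) (measurableSet_singleton _))
  have hone : ∀ i, μ {ω | ξ i ω = 1 ∨ ξ i ω = -1} = 1 := by
    intro i
    have hsplit : {ω | ξ i ω = 1 ∨ ξ i ω = -1}
        = {ω | ξ i ω = 1} ∪ {ω | ξ i ω = -1} := by
      ext ω; simp
    have hd01 : Disjoint {ω | ξ i ω = 1} {ω | ξ i ω = -1} := by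
      rw [Set.disjoint_left]
      rintro ω h1 h2
      simp only [Set.mem_setOf_eq] at h1 h2
      omega
    rw [hsplit, measure_union hd01
      (show MeasurableSet {ω | ξ i ω = -1} from (hmeasξ i) (measurableSet_singleton (-1)))]
    rw [(hdistξ i).1, (hdistξ i).2]
    rw [ENNReal.div_add_div_same]
    rw [show (1:ℝ≥0∞) + 1 = 2 from one_add_one_eq_two]
    exact ENNReal.div_self (two_ne_zero) (ENNReal.ofNat_ne_top)
  set E : Set Ω := {ω | ∀ i ∈ Finset.range N, (ξ i ω = 1 ∨ ξ i ω = -1)} with hEdef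
  have hEeq : E = ⋂ i ∈ Finset.range N, {ω | ξ i ω = 1 ∨ ξ i ω = -1} := by
    ext ω; simp [hEdef]
  have hEc : μ Eᶜ = 0 := by
    have hsub : Eᶜ ⊆ ⋃ i ∈ (↑(Finset.range N) : Set ℕ), {ω | ξ i ω = 1 ∨ ξ i ω = -1}ᶜ := by
      intro ω hω
      simp only [hEdef, Set.mem_compl_iff, Set.mem_setOf_eq, not_forall] at hω
      obtain ⟨i, hi, hneg⟩ := hω
      simp only [Set.mem_iUnion, Set.mem_compl_iff, Set.mem_setOf_eq, Finset.mem_coe]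
      exact ⟨i, hi, hneg⟩
    apply measure_mono_null hsub
    rw [measure_biUnion_null_iff (Finset.range N).countable_toSet]
    intro i _
    exact (prob_compl_eq_zero_iff (hBmeas i)).mpr (hone i)
  -- the atoms
  set A : (Fin N → ℤ) → Set Ω := fun ε => {ω | ∀ i : Fin N, ξ i ω = ε i} with hAdef
  have hAmeas : ∀ ε, MeasurableSet (A ε) := by
    intro ε
    have : A ε = ⋂ i : Fin N, (ξ i ⁻¹' {ε i}) := by
      ext ω; simp [hAdef, Set.mem_preimage]
    rw [this]
    exact MeasurableSet.iInter fun i => (hmeasξ i) (measurableSet_singleton _)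
  have hAmeasure : ∀ ε ∈ (Fintype.piFinset fun _ : Fin N => ({-1, 1} : Finset ℤ)),
      μ (A ε) = (2⁻¹ : ℝ≥0∞)^N := by
    intro ε hε
    simp only [Fintype.mem_piFinset, Finset.mem_insert, Finset.mem_singleton] at hε
    set εx : ℕ → ℤ := fun i => if h : i < N then ε ⟨i, h⟩ else 0 with hεx
    have hAeq : A ε = ⋂ i ∈ Finset.range N, (ξ i ⁻¹' {εx i}) := by
      ext ω
      simp only [hAdef, Set.mem_setOf_eq, Set.mem_iInter, Set.mem_preimage,
        Set.mem_singleton_iff, Finset.mem_range]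
      constructor
      · intro h i hi
        rw [hεx]; simp only [hi, dif_pos]
        exact h ⟨i, hi⟩
      · intro h i
        have := h i.val i.isLt
        rw [hεx] at this
        simpa [i.isLt] using this
    rw [hAeq]
    rw [hindepξ.measure_inter_preimage_eq_mul (Finset.range N)
      (sets := fun i => {εx i}) (fun i _ => measurableSet_singleton _)]
    have : ∀ i ∈ Finset.range N, μ (ξ i ⁻¹' {εx i}) = (2⁻¹ : ℝ≥0∞) := by
      intro i hi
      rw [Finset.mem_range] at hi
      have hval : εx i = ε ⟨i, hi⟩ := by rw [hεx]; simp [hi]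
      rcases hε ⟨i, hi⟩ with h | h
      · rw [hval, h]
        have : ξ i ⁻¹' {-1} = {ω | ξ i ω = -1} := rfl
        rw [this, (hdistξ i).2]
        norm_num
      · rw [hval, h]
        have : ξ i ⁻¹' {1} = {ω | ξ i ω = 1} := rfl
        rw [this, (hdistξ i).1]
        norm_num
    rw [Finset.prod_congr rfl this, Finset.prod_const, Finset.card_range]
  -- decomposition
  set Sp := (Fintype.piFinset fun _ : Fin N => ({-1, 1} : Finset ℤ)).filter
      (fun ε => p (∑ i, ε i)) with hSp
  have hdecomp : {ω | p (∑ i ∈ Finset.range N, ξ i ω)} ∩ E = ⋃ ε ∈ Sp, A ε := by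
    ext ω
    simp only [Set.mem_inter_iff, Set.mem_setOf_eq, Set.mem_iUnion, hSp,
      Finset.mem_filter, Fintype.mem_piFinset, Finset.mem_insert, Finset.mem_singleton,
      hAdef, hEdef, Finset.mem_range]
    constructor
    · rintro ⟨hp, hE⟩
      refine ⟨fun i => ξ i.val ω, ⟨⟨fun i => ?_, ?_⟩, fun i => rfl⟩⟩
      · rcases hE i.val i.isLt with h | h
        · right; exact h
        · left; exact h
      · rwa [Fin.sum_univ_eq_sum_range (fun i => ξ i ω) N]
    · rintro ⟨ε, ⟨⟨hmem, hp⟩, hval⟩⟩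
      constructor
      · have : ∑ i ∈ Finset.range N, ξ i ω = ∑ i : Fin N, ε i := by
          rw [← Fin.sum_univ_eq_sum_range (fun i => ξ i ω) N]
          exact Finset.sum_congr rfl (fun i _ => hval i)
        rw [this]; exact hp
      · intro i hi
        rw [hval ⟨i, hi⟩]
        rcases hmem ⟨i, hi⟩ with h | h
        · right; exact h
        · left; exact h
  -- disjointness
  have hdisj : Set.PairwiseDisjoint (↑Sp) A := by
    intro ε _ ε' _ hne
    rw [Function.onFun, Set.disjoint_left]
    intro ω h1 h2
    apply hne
    funext i
    rw [← h1 i, ← h2 i]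
  -- conclude
  have h1 : μ {ω | p (∑ i ∈ Finset.range N, ξ i ω)}
      = μ ({ω | p (∑ i ∈ Finset.range N, ξ i ω)} ∩ E) :=
    (measure_inter_conull hEc).symm
  rw [h1, hdecomp, measure_biUnion_finset hdisj (fun ε _ => hAmeas ε)]
  rw [Finset.sum_congr rfl (fun ε hε => hAmeasure ε (Finset.mem_filter.mp hε).1)]
  rw [Finset.sum_const, nsmul_eq_mul]


theorem conditional_hit_exact_level
{Ω : Type*} [MeasurableSpace Ω] (μ : MeasureTheory.Measure Ω)
    [MeasureTheory.IsProbabilityMeasure μ]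
    (ξ : ℕ → Ω → ℤ) (hmeasξ : ∀ i, Measurable (ξ i))
    (hindepξ : ProbabilityTheory.iIndepFun ξ μ)
    (hdistξ : ∀ i, μ {ω | ξ i ω = 1} = 1/2 ∧ μ {ω | ξ i ω = -1} = 1/2)
    (W : ℕ → Ω → ℤ) (hW : ∀ n ω, W n ω = ∑ i ∈ Finset.range n, ξ i ω) :
    ∃ K : ℝ, 0 < K ∧ ∀ n : ℕ, 1 ≤ n → ∀ x : ℤ, Even x → 0 < x → x ≤ 2*n →
      K / Real.sqrt n
        ≤ ((ProbabilityTheory.cond μ {ω | x ≤ W (2*n) ω})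
            {ω | W (2*n) ω = x}).toReal := by
  classical
  refine ⟨1/4, by norm_num, ?_⟩
  intro n hn x hx hx0 hx2n
  -- extract k
  obtain ⟨r, hr⟩ := hx
  have hk0 : (0:ℤ) < r := by omega
  set k : ℕ := r.toNat with hkdef
  have hkr : (k:ℤ) = r := Int.toNat_of_nonneg hk0.le
  have hxk : x = 2*(k:ℤ) := by omega
  have hk1 : 1 ≤ k := by omega
  have hkn : k ≤ n := by omega
  -- measurability
  have hWm : Measurable (W (2*n)) := by
    have : W (2*n) = fun ω => ∑ i ∈ Finset.range (2*n), ξ i ω := funext (hW (2*n))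
    rw [this]
    exact Finset.measurable_sum _ (fun i _ => hmeasξ i)
  have hAm : MeasurableSet {ω | x ≤ W (2*n) ω} := by
    have : {ω | x ≤ W (2*n) ω} = (W (2*n)) ⁻¹' (Set.Ici x) := rfl
    rw [this]
    exact hWm measurableSet_Ici
  -- measures of the two events
  set cB : ℕ := (2*n).choose (n+k) with hcB
  set cA : ℕ := ∑ j ∈ Finset.Icc (n+k) (2*n), (2*n).choose j with hcA
  have hμB : μ {ω | W (2*n) ω = x} = (cB : ℝ≥0∞) * (2⁻¹ : ℝ≥0∞)^(2*n) := by
    have hset : {ω | W (2*n) ω = x}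
        = {ω | (fun s : ℤ => s = x) (∑ i ∈ Finset.range (2*n), ξ i ω)} := by
      ext ω; simp only [Set.mem_setOf_eq, hW]
    rw [hset, meas_sum_eq μ ξ hmeasξ hindepξ hdistξ (2*n) (fun s => s = x)]
    congr 1
    rw [card_pm_filter (2*n) (fun s => s = x)]
    rw [show ((Finset.univ : Finset (Finset (Fin (2*n)))).filter
        (fun P => 2*(P.card:ℤ) - (2*n:ℕ) = x))
      = ((Finset.univ : Finset (Finset (Fin (2*n)))).filter (fun P => P.card = n+k)) from ?_]
    · rw [card_filter_card_eq]
    · apply Finset.filter_congr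
      intro P _
      omega
  have hμA : μ {ω | x ≤ W (2*n) ω} = (cA : ℝ≥0∞) * (2⁻¹ : ℝ≥0∞)^(2*n) := by
    have hset : {ω | x ≤ W (2*n) ω}
        = {ω | (fun s : ℤ => x ≤ s) (∑ i ∈ Finset.range (2*n), ξ i ω)} := by
      ext ω; simp only [Set.mem_setOf_eq, hW]
    rw [hset, meas_sum_eq μ ξ hmeasξ hindepξ hdistξ (2*n) (fun s => x ≤ s)]
    congr 1
    rw [card_pm_filter (2*n) (fun s => x ≤ s)]
    rw [show ((Finset.univ : Finset (Finset (Fin (2*n)))).filter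
        (fun P => x ≤ 2*(P.card:ℤ) - (2*n:ℕ)))
      = ((Finset.univ : Finset (Finset (Fin (2*n)))).filter (fun P => n+k ≤ P.card)) from ?_]
    · rw [card_filter_card_ge]
    · apply Finset.filter_congr
      intro P _
      omega
  -- conditional probability
  have hsub : {ω | W (2*n) ω = x} ⊆ {ω | x ≤ W (2*n) ω} := by
    intro ω hω
    simp only [Set.mem_setOf_eq] at hω ⊢
    omega
  have hcond : ProbabilityTheory.cond μ {ω | x ≤ W (2*n) ω} {ω | W (2*n) ω = x}
      = (μ {ω | x ≤ W (2*n) ω})⁻¹ * μ {ω | W (2*n) ω = x} := by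
    rw [ProbabilityTheory.cond_apply hAm, Set.inter_eq_self_of_subset_right hsub]
  -- positivity facts
  have hcB1 : 1 ≤ cB := Nat.choose_pos (by omega)
  have hnk2n : n + k ≤ 2*n := by omega
  have hmemIcc : n + k ∈ Finset.Icc (n+k) (2*n) := Finset.mem_Icc.mpr ⟨le_rfl, hnk2n⟩
  have hcAB : cB ≤ cA :=
    Finset.single_le_sum (f := fun j => (2*n).choose j)
      (fun j _ => Nat.zero_le _) hmemIcc
  have hcA1 : 1 ≤ cA := le_trans hcB1 hcAB
  -- toReal computation
  have hcAne : cA ≠ 0 := by omega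
  have hpowne : ((2⁻¹ : ℝ≥0∞))^(2*n) ≠ 0 :=
    pow_ne_zero _ (ENNReal.inv_ne_zero.mpr ENNReal.ofNat_ne_top)
  rw [hcond, hμA, hμB]
  have hcalc : (((cA:ℝ≥0∞) * (2⁻¹:ℝ≥0∞)^(2*n))⁻¹ * ((cB:ℝ≥0∞) * (2⁻¹:ℝ≥0∞)^(2*n))).toReal
      = (cB:ℝ) * ((2⁻¹:ℝ)^(2*n)) * ((cA:ℝ) * ((2⁻¹:ℝ)^(2*n)))⁻¹ := by
    rw [ENNReal.toReal_mul, ENNReal.toReal_inv, mul_comm]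
    congr 1
    · rw [ENNReal.toReal_mul, ENNReal.toReal_pow, ENNReal.toReal_inv, ENNReal.toReal_ofNat,
        ENNReal.toReal_natCast]
    · congr 1
      rw [ENNReal.toReal_mul, ENNReal.toReal_pow, ENNReal.toReal_inv, ENNReal.toReal_ofNat,
        ENNReal.toReal_natCast]
  rw [hcalc]
  -- now a real inequality
  have hcApos : (0:ℝ) < cA := by exact_mod_cast hcA1
  have hcBpos : (0:ℝ) < cB := by exact_mod_cast hcB1
  have hspos : (0:ℝ) < ((2:ℝ)⁻¹)^(2*n) := by positivity
  have hsqpos : 0 < Real.sqrt n := Real.sqrt_pos.mpr (by exact_mod_cast hn)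
  have hmain : (cA:ℝ) ≤ 4 * Real.sqrt n * cB := by
    have h := sum_choose_le n k hk1 hkn
    rw [hcA, hcB]
    rw [Nat.cast_sum]
    exact h
  have hval : (cB:ℝ) * ((2⁻¹:ℝ)^(2*n)) * ((cA:ℝ) * ((2⁻¹:ℝ)^(2*n)))⁻¹ = (cB:ℝ)/(cA:ℝ) := by
    field_simp
  rw [hval, div_le_div_iff₀ hsqpos hcApos]
  nlinarith [hmain, hcBpos, hsqpos]
end

section
/- Let J_1, …, J_n be {0,1}-valued random variables such that E(J_{k+1} | J_1,…,J_k) ≥ η almost surely for all 0 ≤ k ≤ n−1, where η > 0 is nonrandom. Then for all λ ∈ (0,η), P(Σ_{i=1}^n J_i ≤ λn) ≤ exp(−n(η−λ)^2/(2η)). -/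
open MeasureTheory

section Aux

open Real Finset

variable {Ω : Type*} {m0 : MeasurableSpace Ω}

private lemma exp_neg_quad {t : ℝ} (ht : 0 ≤ t) : Real.exp (-t) ≤ 1 - t + t^2/2 := by
  have h1 := Real.quadratic_le_exp_of_nonneg ht
  have h2 : Real.exp (-t) * Real.exp t = 1 := by rw [← Real.exp_add]; simp
  nlinarith [Real.exp_pos t, Real.exp_pos (-t), sq_nonneg t, sq_nonneg (t^2)]

private lemma key_bound (μ : Measure Ω) [IsProbabilityMeasure μ]
    (J : ℕ → Ω → ℝ)
    (hmeas : ∀ k, Measurable (J k))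
    (h01 : ∀ k ω, J k ω = 0 ∨ J k ω = 1)
    (η : ℝ) (hη : 0 < η) (hη1 : η ≤ 1)
    (t : ℝ) (ht : 0 < t) :
    ∀ n : ℕ, (∀ k, k < n → ∀ᵐ ω ∂μ,
      η ≤ (μ[J k | ⨆ i ∈ Finset.range k, MeasurableSpace.comap (J i) inferInstance]) ω) →
    ∫ ω, Real.exp (-t * ∑ i ∈ Finset.range n, J i ω) ∂μ
      ≤ (1 - η * (1 - Real.exp (-t)))^n := by
  have hJ0 : ∀ k ω, 0 ≤ J k ω := fun k ω => by rcases h01 k ω with h | h <;> simp [h]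
  have hJ1 : ∀ k ω, J k ω ≤ 1 := fun k ω => by rcases h01 k ω with h | h <;> simp [h]
  set c : ℝ := 1 - Real.exp (-t) with hc
  have hc0 : 0 < c := by
    have : Real.exp (-t) < 1 := Real.exp_lt_one_iff.2 (by linarith)
    simp [hc]; linarith
  have hc1 : c < 1 := by have := Real.exp_pos (-t); simp [hc]; linarith
  have hr0 : 0 ≤ 1 - η * c := by nlinarith
  -- measurability and integrability of the exponential weights
  have hSmeas : ∀ n, Measurable (fun ω => ∑ i ∈ Finset.range n, J i ω) :=
    fun n => Finset.measurable_sum _ fun i _ => hmeas i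
  have hS0 : ∀ n ω, 0 ≤ ∑ i ∈ Finset.range n, J i ω :=
    fun n ω => Finset.sum_nonneg fun i _ => hJ0 i ω
  have hXmeas : ∀ n, Measurable (fun ω => Real.exp (-t * ∑ i ∈ Finset.range n, J i ω)) :=
    fun n => ((hSmeas n).const_mul (-t)).exp
  have hX1 : ∀ n ω, Real.exp (-t * ∑ i ∈ Finset.range n, J i ω) ≤ 1 := by
    intro n ω
    rw [Real.exp_le_one_iff]
    have := hS0 n ω; nlinarith
  have hXint : ∀ n, Integrable (fun ω => Real.exp (-t * ∑ i ∈ Finset.range n, J i ω)) μ := by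
    intro n
    exact ⟨(hXmeas n).aestronglyMeasurable,
      HasFiniteIntegral.of_bounded (C := 1) (ae_of_all _ fun ω => by
        rw [Real.norm_eq_abs, abs_of_pos (Real.exp_pos _)]; exact hX1 n ω)⟩
  intro n
  induction n with
  | zero =>
    intro _
    simp
  | succ n ih =>
    intro hcond
    have hcn : ∀ k, k < n → ∀ᵐ ω ∂μ,
        η ≤ (μ[J k | ⨆ i ∈ Finset.range k, MeasurableSpace.comap (J i) inferInstance]) ω :=
      fun k hk => hcond k (hk.trans (Nat.lt_succ_self n))
    have IH := ih hcn
    set Fm : MeasurableSpace Ω :=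
      ⨆ i ∈ Finset.range n, MeasurableSpace.comap (J i) inferInstance with hFm
    have hFm_le : Fm ≤ m0 :=
      iSup₂_le fun i _ => (hmeas i).comap_le
    set X : Ω → ℝ := fun ω => Real.exp (-t * ∑ i ∈ Finset.range n, J i ω) with hX
    -- X is Fm-strongly measurable
    have hX_sm : StronglyMeasurable[Fm] X := by
      have hsum : Measurable[Fm] (fun ω => ∑ i ∈ Finset.range n, J i ω) := by
        apply Finset.measurable_sum
        intro i hi
        exact Measurable.of_comap_le
          (le_iSup₂ (f := fun i (_ : i ∈ Finset.range n) =>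
            MeasurableSpace.comap (J i) inferInstance) i hi)
      exact (Measurable.exp (hsum.const_mul (-t))).stronglyMeasurable
    have hJint : Integrable (J n) μ :=
      ⟨(hmeas n).aestronglyMeasurable,
        HasFiniteIntegral.of_bounded (C := 1) (ae_of_all _ fun ω => by
          rw [Real.norm_eq_abs, abs_of_nonneg (hJ0 n ω)]; exact hJ1 n ω)⟩
    have hXJint : Integrable (X * J n) μ := by
      refine ⟨((hXmeas n).mul (hmeas n)).aestronglyMeasurable,
        HasFiniteIntegral.of_bounded (C := 1) (ae_of_all _ fun ω => ?_)⟩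
      simp only [Pi.mul_apply, Real.norm_eq_abs, abs_mul,
        abs_of_pos (Real.exp_pos _), abs_of_nonneg (hJ0 n ω)]
      calc |X ω| * J n ω ≤ 1 * 1 := by
            rw [abs_of_pos (show 0 < X ω from Real.exp_pos _)]
            exact mul_le_mul (hX1 n ω) (hJ1 n ω) (hJ0 n ω) zero_le_one
        _ = 1 := one_mul 1
    -- pull-out property
    have hpull : μ[X * J n | Fm] =ᵐ[μ] X * μ[J n | Fm] :=
      condExp_mul_of_stronglyMeasurable_left hX_sm hXJint hJint
    have hcondint : Integrable (X * μ[J n | Fm]) μ :=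
      (integrable_condExp (f := X * J n)).congr hpull
    have hXJ_eq : ∫ ω, X ω * J n ω ∂μ = ∫ ω, X ω * (μ[J n | Fm]) ω ∂μ := by
      calc ∫ ω, X ω * J n ω ∂μ = ∫ ω, (X * J n) ω ∂μ := rfl
        _ = ∫ ω, (μ[X * J n | Fm]) ω ∂μ := (integral_condExp hFm_le).symm
        _ = ∫ ω, (X * μ[J n | Fm]) ω ∂μ := integral_congr_ae hpull
        _ = ∫ ω, X ω * (μ[J n | Fm]) ω ∂μ := rfl
    have hkey : η * ∫ ω, X ω ∂μ ≤ ∫ ω, X ω * J n ω ∂μ := by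
      rw [hXJ_eq, ← integral_const_mul]
      refine integral_mono_ae ((hXint n).const_mul η) hcondint ?_
      filter_upwards [hcond n (Nat.lt_succ_self n)] with ω hω
      calc η * X ω = X ω * η := mul_comm _ _
        _ ≤ X ω * (μ[J n | Fm]) ω :=
            mul_le_mul_of_nonneg_left hω (Real.exp_pos _).le
    -- rewrite the (n+1)-integral
    have hrw : (fun ω => Real.exp (-t * ∑ i ∈ Finset.range (n+1), J i ω))
        = fun ω => X ω - c * (X ω * J n ω) := by
      funext ω
      rw [Finset.sum_range_succ]
      rcases h01 n ω with h | h
      · simp [hX, h]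
      · rw [h]
        have : -t * (∑ i ∈ Finset.range n, J i ω + 1)
            = -t * ∑ i ∈ Finset.range n, J i ω + (-t) := by ring
        rw [this, Real.exp_add]
        simp only [hX, hc, h]
        ring
    rw [hrw]
    have hint2 : Integrable (fun ω => c * (X ω * J n ω)) μ := hXJint.const_mul c
    have hsub : ∫ ω, (X ω - c * (X ω * J n ω)) ∂μ
        = (∫ ω, X ω ∂μ) - c * ∫ ω, X ω * J n ω ∂μ := by
      rw [integral_sub (hXint n) hint2, integral_const_mul]
    rw [hsub]
    have hXle : ∫ ω, X ω ∂μ ≤ (1 - η * c)^n := IH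
    have hXnn : 0 ≤ ∫ ω, X ω ∂μ :=
      integral_nonneg fun ω => (Real.exp_pos _).le
    calc ∫ ω, X ω ∂μ - c * ∫ ω, X ω * J n ω ∂μ
        ≤ ∫ ω, X ω ∂μ - c * (η * ∫ ω, X ω ∂μ) := by
          have := mul_le_mul_of_nonneg_left hkey hc0.le
          linarith
      _ = (1 - η * c) * ∫ ω, X ω ∂μ := by ring
      _ ≤ (1 - η * c) * (1 - η * c)^n := mul_le_mul_of_nonneg_left hXle hr0
      _ = (1 - η * c)^(n+1) := by ring

end Aux

theorem bernstein_type_inequality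
    {Ω : Type*} [MeasurableSpace Ω] (μ : Measure Ω) [IsProbabilityMeasure μ]
    (n : ℕ) (J : ℕ → Ω → ℝ) (hmeas : ∀ k, Measurable (J k))
    (h01 : ∀ k ω, J k ω = 0 ∨ J k ω = 1)
    (η : ℝ) (hη : 0 < η)
    (hcond : ∀ k, k < n → ∀ᵐ ω ∂μ,
      η ≤ (μ[J k | ⨆ i ∈ Finset.range k, MeasurableSpace.comap (J i) inferInstance]) ω)
    (lam : ℝ) (hlam0 : 0 < lam) (hlamη : lam < η) :
    (μ {ω | ∑ i ∈ Finset.range n, J i ω ≤ lam * n}).toReal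
      ≤ Real.exp (-(n * (η - lam)^2) / (2*η)) := by
  rcases Nat.eq_zero_or_pos n with hn | hn
  · subst hn
    simp
  -- η ≤ 1
  have hJ0 : ∀ k ω, 0 ≤ J k ω := fun k ω => by rcases h01 k ω with h | h <;> simp [h]
  have hJ1 : ∀ k ω, J k ω ≤ 1 := fun k ω => by rcases h01 k ω with h | h <;> simp [h]
  have hJint : ∀ k, Integrable (J k) μ := fun k =>
    ⟨(hmeas k).aestronglyMeasurable,
      HasFiniteIntegral.of_bounded (C := 1) (ae_of_all _ fun ω => by
        rw [Real.norm_eq_abs, abs_of_nonneg (hJ0 k ω)]; exact hJ1 k ω)⟩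
  have hη1 : η ≤ 1 := by
    have hFm_le : (⨆ i ∈ Finset.range 0,
        MeasurableSpace.comap (J i) inferInstance : MeasurableSpace Ω)
        ≤ ‹MeasurableSpace Ω› := by
      exact iSup₂_le fun i _ => (hmeas i).comap_le
    set Fm : MeasurableSpace Ω :=
      ⨆ i ∈ Finset.range 0, MeasurableSpace.comap (J i) inferInstance
    have h1 : μ[J 0 | Fm] ≤ᵐ[μ] μ[(fun _ => (1:ℝ)) | Fm] :=
      condExp_mono (hJint 0) (integrable_const 1) (ae_of_all _ fun ω => hJ1 0 ω)
    have h2 : μ[(fun _ => (1:ℝ)) | Fm] = fun _ => (1:ℝ) := condExp_const (μ := μ) hFm_le (1:ℝ)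
    haveI : (MeasureTheory.ae μ).NeBot := ae_neBot.mpr (IsProbabilityMeasure.ne_zero μ)
    obtain ⟨ω, hω1, hω2⟩ := ((hcond 0 hn).and h1).exists
    rw [h2] at hω2
    exact hω1.trans hω2
  set t : ℝ := (η - lam) / η with hts
  have ht : 0 < t := div_pos (by linarith) hη
  set c : ℝ := 1 - Real.exp (-t) with hcs
  have hc0 : 0 < c := by
    have : Real.exp (-t) < 1 := Real.exp_lt_one_iff.2 (by linarith)
    simp [hcs]; linarith
  have hc1 : c < 1 := by have := Real.exp_pos (-t); simp [hcs]; linarith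
  have hr0 : 0 ≤ 1 - η * c := by nlinarith
  have hkey := key_bound μ J hmeas h01 η hη hη1 t ht n hcond
  -- Markov step
  set S : Ω → ℝ := fun ω => ∑ i ∈ Finset.range n, J i ω with hSs
  have hSmeas : Measurable S := Finset.measurable_sum _ fun i _ => hmeas i
  set A : Set Ω := {ω | S ω ≤ lam * n} with hAs
  have hAmeas : MeasurableSet A := measurableSet_le hSmeas measurable_const
  set X : Ω → ℝ := fun ω => Real.exp (-t * S ω) with hXs
  have hXint : Integrable X μ := by
    refine ⟨(((hSmeas).const_mul (-t)).exp).aestronglyMeasurable,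
      HasFiniteIntegral.of_bounded (C := 1) (ae_of_all _ fun ω => ?_)⟩
    rw [Real.norm_eq_abs, abs_of_pos (Real.exp_pos _), Real.exp_le_one_iff]
    have : 0 ≤ S ω := Finset.sum_nonneg fun i _ => hJ0 i ω
    nlinarith
  have hmarkov : (μ A).toReal * Real.exp (-t * (lam * n)) ≤ (1 - η * c)^n := by
    calc (μ A).toReal * Real.exp (-t * (lam * n))
        = ∫ _ in A, Real.exp (-t * (lam * n)) ∂μ := by
          rw [setIntegral_const, smul_eq_mul]; rfl
      _ ≤ ∫ ω in A, X ω ∂μ := by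
          refine setIntegral_mono_on (integrable_const _).integrableOn
            hXint.integrableOn hAmeas fun ω hω => ?_
          have hω' : S ω ≤ lam * n := hω
          exact Real.exp_le_exp.2 (by nlinarith)
      _ ≤ ∫ ω, X ω ∂μ := setIntegral_le_integral hXint
          (ae_of_all _ fun ω => (Real.exp_pos _).le)
      _ ≤ (1 - η * c)^n := hkey
  have hexp_pos : (0:ℝ) < Real.exp (-t * (lam * n)) := Real.exp_pos _
  have h1 : (μ A).toReal ≤ (1 - η * c)^n * Real.exp (t * (lam * n)) := by
    rw [← le_div_iff₀ hexp_pos] at hmarkov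
    calc (μ A).toReal ≤ (1 - η * c)^n / Real.exp (-t * (lam * n)) := hmarkov
      _ = (1 - η * c)^n * Real.exp (t * (lam * n)) := by
          rw [div_eq_mul_inv, ← Real.exp_neg]; ring_nf
  refine h1.trans ?_
  -- final estimate
  have h2 : (1 - η * c)^n ≤ Real.exp (-(η * c))^n :=
    pow_le_pow_left₀ hr0 (by linarith [Real.add_one_le_exp (-(η * c))]) n
  have h3 : Real.exp (-(η * c))^n = Real.exp (n * (-(η * c))) := (Real.exp_nat_mul _ n).symm
  have hcge : t - t^2/2 ≤ c := by
    have := exp_neg_quad ht.le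
    simp only [hcs]; linarith
  calc (1 - η * c)^n * Real.exp (t * (lam * n))
      ≤ Real.exp (n * (-(η * c))) * Real.exp (t * (lam * n)) := by
        refine mul_le_mul_of_nonneg_right ?_ (Real.exp_pos _).le
        rw [← h3]; exact h2
    _ = Real.exp (n * (-(η * c)) + t * (lam * n)) := (Real.exp_add _ _).symm
    _ ≤ Real.exp (-(n * (η - lam)^2) / (2*η)) := by
        apply Real.exp_le_exp.2
        have hn0 : (0:ℝ) ≤ n := Nat.cast_nonneg n
        have hts' : t * η = η - lam := by
          rw [hts]; field_simp
        have : n * (-(η * c)) + t * (lam * n)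
            ≤ n * (-(η * (t - t^2/2))) + t * (lam * n) := by
          have := mul_le_mul_of_nonneg_left hcge hη.le
          nlinarith
        refine this.trans ?_
        have heq : n * (-(η * (t - t^2/2))) + t * (lam * n)
            = -(n * (η - lam)^2) / (2*η) := by
          have hη' : η ≠ 0 := ne_of_gt hη
          field_simp [hts]
          linear_combination (2*lam - 2*η + t*η + (η - lam)) * hts'
        linarith [heq.le]
end
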